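/- Tree-like model property: every satisfiable Cycle-CTL* state formula is satisfiable in a Kripke structure that is a tree with back edges. That is, if K ⊨ φ for some Kripke structure K, then there is a tree with back edges K' with K' ⊨ φ. -/

import Mathlib

namespace CycleCTL

universe u v

/-- A Kripke structure over a set `AP` of atomic propositions. -/
structure Kripke (AP : Type) : Type (u + 1) where
  World : Type u
  init : World
  R : World → World → Prop
  label : World → Set AP
  serial : ∀ w, ∃ v, R w v

variable {AP : Type}

/-- An (infinite) path of a Kripke structure. -/
def IsPath (K : Kripke.{u} AP) (π : ℕ → K.World) : Prop :=
  ∀ i, K.R (π i) (π (i + 1))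

/-- A cycle: a path visiting its first world infinitely often. -/
def IsCycle (K : Kripke.{u} AP) (π : ℕ → K.World) : Prop :=
  IsPath K π ∧ ∀ i, ∃ j, i < j ∧ π j = π 0

mutual
  /-- State formulas of Cycle-CTL*. -/
  inductive StateForm (AP : Type) : Type where
    | atom : AP → StateForm AP
    | not  : StateForm AP → StateForm AP
    | and  : StateForm AP → StateForm AP → StateForm AP
    | or   : StateForm AP → StateForm AP → StateForm AP
    | E    : PathForm AP → StateForm AP
    | A    : PathForm AP → StateForm AP
    | Ec   : PathForm AP → StateForm AP
    | Ac   : PathForm AP → StateForm AP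
  /-- Path formulas of Cycle-CTL*. -/
  inductive PathForm (AP : Type) : Type where
    | state : StateForm AP → PathForm AP
    | not   : PathForm AP → PathForm AP
    | and   : PathForm AP → PathForm AP → PathForm AP
    | or    : PathForm AP → PathForm AP → PathForm AP
    | next  : PathForm AP → PathForm AP
    | untl  : PathForm AP → PathForm AP → PathForm AP
end

mutual
  /-- Satisfaction of a state formula at a world. -/
  def SatS (K : Kripke.{u} AP) : K.World → StateForm AP → Prop
    | w, .atom p => p ∈ K.label w
    | w, .not φ => ¬ SatS K w φ
    | w, .and φ₁ φ₂ => SatS K w φ₁ ∧ SatS K w φ₂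
    | w, .or φ₁ φ₂ => SatS K w φ₁ ∨ SatS K w φ₂
    | w, .E ψ => ∃ π, IsPath K π ∧ π 0 = w ∧ SatP K π 0 ψ
    | w, .A ψ => ∀ π, IsPath K π → π 0 = w → SatP K π 0 ψ
    | w, .Ec ψ => ∃ π, IsCycle K π ∧ π 0 = w ∧ SatP K π 0 ψ
    | w, .Ac ψ => ∀ π, IsCycle K π → π 0 = w → SatP K π 0 ψ
  /-- Satisfaction of a path formula on a path at a position. -/
  def SatP (K : Kripke.{u} AP) : (ℕ → K.World) → ℕ → PathForm AP → Prop
    | π, i, .state φ => SatS K (π i) φ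
    | π, i, .not ψ => ¬ SatP K π i ψ
    | π, i, .and ψ₁ ψ₂ => SatP K π i ψ₁ ∧ SatP K π i ψ₂
    | π, i, .or ψ₁ ψ₂ => SatP K π i ψ₁ ∨ SatP K π i ψ₂
    | π, i, .next ψ => SatP K π (i + 1) ψ
    | π, i, .untl ψ₁ ψ₂ => ∃ k, SatP K π (i + k) ψ₂ ∧ ∀ j < k, SatP K π (i + j) ψ₁
end

/-- `K ⊨ φ` : satisfaction at the initial world. -/
def Sat (K : Kripke.{u} AP) (φ : StateForm AP) : Prop := SatS K K.init φ

/-- `⊤` as a path formula, abbreviating `p ∨ ¬p`. -/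
def topP (p : AP) : PathForm AP := .or (.state (.atom p)) (.not (.state (.atom p)))

/-- `F ψ` abbreviates `⊤ U ψ`. -/
def FP (p : AP) (ψ : PathForm AP) : PathForm AP := .untl (topP p) ψ

/-- `G ψ` abbreviates `¬(⊤ U ¬ψ)`. -/
def GP (p : AP) (ψ : PathForm AP) : PathForm AP := .not (FP p (.not ψ))


/-- `(W, R₀)` is a tree with root `r`: every node is reachable from the root, the relation is
acyclic, every node has at most one parent, and the root has no parent. -/
def IsTree {W : Type u} (R : W → W → Prop) (r : W) : Prop :=
  (∀ w, Relation.ReflTransGen R r w) ∧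
  (∀ w, ¬ Relation.TransGen R w w) ∧
  (∀ w v v', R v w → R v' w → v = v') ∧
  (∀ v, ¬ R v r)

/-- `(R₀, f)` is a tree decomposition of `K`, witnessing that `K` is a tree with back edges:
(i) `(W, R₀)` is a tree rooted at the initial world; (ii) `R = R₀ ∪ {(w, f w)}`;
(iii) `f w` is a (proper) ancestor of `w`; (iv) back edges do not cross. -/
def IsTreeDecomp (K : Kripke.{u} AP) (R₀ : K.World → K.World → Prop)
    (f : K.World → Option K.World) : Prop :=
  IsTree R₀ K.init ∧
  (∀ w v, K.R w v ↔ (R₀ w v ∨ f w = some v)) ∧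
  (∀ w v, f w = some v → Relation.TransGen R₀ v w) ∧
  (∀ w₁ w₂ u₂, (f w₁).isSome → f w₂ = some u₂ →
    Relation.TransGen R₀ u₂ w₁ → Relation.TransGen R₀ w₁ w₂ → f w₁ = f w₂)

/-- `K` is a tree with back edges if it admits a tree decomposition. -/
def IsTreeWithBackEdges (K : Kripke.{u} AP) : Prop :=
  ∃ R₀ f, IsTreeDecomp K R₀ f

section Construction
variable (K : Kripke.{u} AP)

/-- head of a list with default. -/
def top : List (K.World × ℕ) → K.World × ℕ
  | [] => (K.init, 0)
  | e :: _ => e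

def pw (ℓ : List (K.World × ℕ)) : K.World := (top K ℓ).1
def cdd (ℓ : List (K.World × ℕ)) : ℕ := (top K ℓ).2

/-- condition for attaching a new element `(v, c)` on top of `ℓ`. -/
def Ok (ℓ : List (K.World × ℕ)) (v : K.World) (c : ℕ) : Prop :=
  c = 0 ∨ (1 ≤ c ∧ c ≤ ℓ.length ∧ K.R v (pw K (ℓ.drop (ℓ.length - c))) ∧
    ∀ s, s <:+ ℓ → c < s.length → cdd K s ≠ 0 → cdd K s = c)

inductive Valid : List (K.World × ℕ) → Prop
  | root : Valid [(K.init, 0)]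
  | cons {ℓ v c} : Valid ℓ → K.R (pw K ℓ) v → Ok K ℓ v c → Valid ((v, c) :: ℓ)

lemma Valid.ne_nil {ℓ} (h : Valid K ℓ) : ℓ ≠ [] := by cases h <;> simp

lemma Valid.suffix {ℓ s} (h : Valid K ℓ) (hs : s <:+ ℓ) (hne : s ≠ []) : Valid K s := by
  induction h with
  | root => rcases List.suffix_cons_iff.1 hs with h | h
            · exact h ▸ .root
            · simp at h; exact absurd h hne
  | cons hv hr ho ih =>
      rcases List.suffix_cons_iff.1 hs with h | h
      · exact h ▸ .cons hv hr ho
      · exact ih h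

lemma Valid.cons_inv {ℓ v c} (h : Valid K ((v, c) :: ℓ)) (hne : ℓ ≠ []) :
    Valid K ℓ ∧ K.R (pw K ℓ) v ∧ Ok K ℓ v c := by
  cases h with
  | root => simp_all
  | cons hv hr ho => exact ⟨hv, hr, ho⟩

/-- the back-edge target list. -/
def btL (ℓ : List (K.World × ℕ)) : List (K.World × ℕ) := ℓ.drop (ℓ.length - cdd K ℓ)

lemma suffix_eq_drop {α : Type*} {s t : List α} (h : s <:+ t) :
    s = t.drop (t.length - s.length) := by
  obtain ⟨pre, rfl⟩ := h
  rw [show (pre ++ s).length - s.length = pre.length by simp, List.drop_left]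

lemma suffix_len_eq {α : Type*} {s₁ s₂ t : List α} (h₁ : s₁ <:+ t) (h₂ : s₂ <:+ t)
    (hl : s₁.length = s₂.length) : s₁ = s₂ := by
  rw [suffix_eq_drop h₁, suffix_eq_drop h₂, hl]

lemma btL_spec {ℓ} (h : Valid K ℓ) (hc : 1 ≤ cdd K ℓ) :
    Valid K (btL K ℓ) ∧ (btL K ℓ).length = cdd K ℓ ∧ btL K ℓ <:+ ℓ ∧
      (btL K ℓ).length < ℓ.length ∧ K.R (pw K ℓ) (pw K (btL K ℓ)) := by
  cases h with
  | root => simp [cdd, top] at hc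
  | @cons ℓ v c hv hr ho =>
      rcases ho with rfl | ⟨h1, h2, h3, _⟩
      · simp [cdd, top] at hc
      have hcd : cdd K ((v, c) :: ℓ) = c := rfl
      have hlen : ((v, c) :: ℓ).length - c = (ℓ.length - c) + 1 := by
        simp [List.length_cons]; omega
      have hbt : btL K ((v, c) :: ℓ) = ℓ.drop (ℓ.length - c) := by
        rw [btL, hcd, hlen, List.drop_succ_cons]
      have hsuf : btL K ((v, c) :: ℓ) <:+ ℓ := hbt ▸ List.drop_suffix _ _
      have hl : (btL K ((v, c) :: ℓ)).length = c := by
        rw [hbt, List.length_drop]; omega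
      refine ⟨hv.suffix K hsuf ?_, hl, hsuf.trans (List.suffix_cons _ _), by simp [hl]; omega,
        ?_⟩
      · intro hnil; rw [hnil] at hl; simp at hl; omega
      · rw [hbt]; exact h3

/-- tree-child relation. -/
def Rt (x y : {ℓ : List (K.World × ℕ) // Valid K ℓ}) : Prop := ∃ e, y.1 = e :: x.1

/-- the back-edge partial function. -/
noncomputable def bt (x : {ℓ : List (K.World × ℕ) // Valid K ℓ}) :
    Option {ℓ : List (K.World × ℕ) // Valid K ℓ} :=
  if h : 1 ≤ cdd K x.1 then some ⟨btL K x.1, (btL_spec K x.2 h).1⟩ else none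

/-- the tree-with-back-edges unraveling of `K`. -/
noncomputable def TK : Kripke.{u} AP where
  World := {ℓ : List (K.World × ℕ) // Valid K ℓ}
  init := ⟨[(K.init, 0)], .root⟩
  R x y := Rt K x y ∨ bt K x = some y
  label x := K.label (pw K x.1)
  serial := by
    intro x
    obtain ⟨v, hv⟩ := K.serial (pw K x.1)
    exact ⟨⟨(v, 0) :: x.1, .cons x.2 hv (Or.inl rfl)⟩, Or.inl ⟨(v, 0), rfl⟩⟩

lemma bt_eq_some {x y} (h : bt K x = some y) :
    1 ≤ cdd K x.1 ∧ y.1 = btL K x.1 := by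
  rw [bt] at h
  split at h
  · exact ⟨‹_›, by cases h; rfl⟩
  · cases h

lemma proj_step {x y : (TK K).World} (h : (TK K).R x y) : K.R (pw K x.1) (pw K y.1) := by
  rcases h with ⟨⟨v, c⟩, he⟩ | h
  · have hy := y.2
    rw [he] at hy
    have := hy.cons_inv K (x.2.ne_nil K)
    rw [he]
    exact this.2.1
  · obtain ⟨hc, hy⟩ := bt_eq_some K h
    rw [hy]
    exact (btL_spec K x.2 hc).2.2.2.2

lemma tg_suffix {x y : (TK K).World} (h : Relation.TransGen (Rt K) x y) :
    x.1 <:+ y.1 ∧ x.1.length < y.1.length := by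
  induction h with
  | single h => obtain ⟨e, he⟩ := h; rw [he]; exact ⟨List.suffix_cons _ _, by simp⟩
  | tail _ h ih =>
      obtain ⟨e, he⟩ := h
      rw [he]
      exact ⟨ih.1.trans (List.suffix_cons _ _), by simp; omega⟩

lemma suffix_tg {x y : (TK K).World} (hs : x.1 <:+ y.1) (hl : x.1.length < y.1.length) :
    Relation.TransGen (Rt K) x y := by
  obtain ⟨ℓy, hy⟩ := y
  induction ℓy with
  | nil => simp at hl
  | cons e t ih =>
      rcases List.suffix_cons_iff.1 hs with h | h
      · exfalso; rw [h] at hl; simp at hl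
      · have ht : t ≠ [] := by
          rintro rfl
          simp only [List.suffix_nil] at h
          exact x.2.ne_nil K h
        have hvt : Valid K t := hy.suffix K (List.suffix_cons _ _) ht
        rcases eq_or_lt_of_le (h.sublist.length_le) with heq | hlt
        · have : x.1 = t := h.sublist.eq_of_length heq
          exact .single ⟨e, by rw [this]⟩
        · exact (ih hvt h hlt).tail ⟨e, rfl⟩

lemma treeDecomp : IsTreeDecomp (TK K) (Rt K) (bt K) := by
  refine ⟨⟨?_, ?_, ?_, ?_⟩, fun w v => Iff.rfl, ?_, ?_⟩
  · -- reachability from root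
    rintro ⟨ℓ, hv⟩
    induction hv with
    | root => exact .refl
    | @cons ℓ v c hv hr ho ih =>
        exact .tail ih ⟨(v, c), rfl⟩
  · -- acyclic
    intro w hw
    exact absurd (tg_suffix K hw).2 (lt_irrefl _)
  · -- unique parent
    rintro w v v' ⟨e, he⟩ ⟨e', he'⟩
    rw [he] at he'
    injection he' with h1 h2
    exact Subtype.ext h2
  · -- root has no parent
    rintro v ⟨e, he⟩
    have he' : [(K.init, 0)] = e :: v.1 := he
    injection he' with h1 h2
    exact v.2.ne_nil K h2.symm
  · -- back edges go to proper ancestors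
    intro w v h
    obtain ⟨hc, hv⟩ := bt_eq_some K h
    have hspec := btL_spec K w.2 hc
    exact suffix_tg K (hv ▸ hspec.2.2.1) (hv ▸ hspec.2.2.2.1)
  · -- non-crossing
    intro w₁ w₂ u₂ h1 h2 hg1 hg2
    obtain ⟨hc2, hu2⟩ := bt_eq_some K h2
    obtain ⟨z, hz⟩ := Option.isSome_iff_exists.1 h1
    obtain ⟨hc1, hz1⟩ := bt_eq_some K hz
    -- w₂.1 = (v,c) :: ℓ
    have hne2 := w₂.2.ne_nil K
    obtain ⟨⟨v, c⟩, ℓ, hw2⟩ : ∃ e ℓ, w₂.1 = e :: ℓ := by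
      cases hw : w₂.1 with
      | nil => exact absurd hw hne2
      | cons a b => exact ⟨a, b, rfl⟩
    have hcc : cdd K w₂.1 = c := by rw [hw2]; rfl
    have hv2 := w₂.2; rw [hw2] at hv2
    have hℓne : ℓ ≠ [] := by
      rintro rfl
      have hc : 1 ≤ c := hcc ▸ hc2
      have hlb := (btL_spec K w₂.2 hc2).2.1
      have hlt := (btL_spec K w₂.2 hc2).2.2.2.1
      rw [hcc] at hlb
      rw [hw2] at hlt hlb
      simp only [List.length_cons, List.length_nil] at hlt
      omega
    obtain ⟨hvℓ, hrℓ, hok⟩ := hv2.cons_inv K hℓne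
    rcases hok with h0 | ⟨_, hcl, _, hsufcond⟩
    · rw [hcc, h0] at hc2; omega
    -- w₁ is a proper suffix of w₂.1 with length > c, hence a suffix of ℓ
    have hs1 := tg_suffix K hg1  -- u₂ <:+ w₁
    have hs2 := tg_suffix K hg2  -- w₁ <:+ w₂
    have hu2len : u₂.1.length = c := by
      rw [hu2]; rw [← hcc]; exact (btL_spec K w₂.2 hc2).2.1
    have hw1ℓ : w₁.1 <:+ ℓ := by
      rcases List.suffix_cons_iff.1 (hw2 ▸ hs2.1) with h | h
      · exfalso; rw [hw2] at hs2; rw [h] at hs2; simp at hs2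
      · exact h
    have hcd1 : cdd K w₁.1 = c := by
      refine hsufcond w₁.1 hw1ℓ ?_ (by omega)
      omega
    -- now both bt targets are suffixes of w₂.1 of length c
    rw [hz, h2]
    congr 1
    apply Subtype.ext
    rw [hz1, hu2]
    have t1 : btL K w₁.1 <:+ w₂.1 := ((btL_spec K w₁.2 hc1).2.2.1).trans hs2.1
    have t2 : btL K w₂.1 <:+ w₂.1 := (btL_spec K w₂.2 hc2).2.2.1
    refine suffix_len_eq (t := w₂.1) t1 t2 ?_
    rw [(btL_spec K w₁.2 hc1).2.1, (btL_spec K w₂.2 hc2).2.1, hcd1, hcc]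

attribute [local instance] Classical.propDecidable

/-- the lift of a `K`-path `p` starting at `pw x` to a path in `TK K` starting at `x`. -/
noncomputable def liftL (x : (TK K).World) (p : ℕ → K.World) : ℕ → List (K.World × ℕ)
  | 0 => x.1
  | j + 1 =>
    if p (j + 1) = p 0 ∧ liftL x p j ≠ x.1 then x.1
    else (p (j + 1), if p (j + 2) = p 0 then x.1.length else 0) :: liftL x p j

lemma mem_of_suffix_long {α : Type*} :
    ∀ (M : List α) {t s : List α} {e : α} {s' : List α},
      s = e :: s' → s <:+ M ++ t → t.length < s.length → e ∈ M := by
  intro M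
  induction M with
  | nil =>
      intro t s e s' hs hsuf hlen
      have := hsuf.sublist.length_le
      simp at this
      omega
  | cons a M' ih =>
      intro t s e s' hs hsuf hlen
      rcases List.suffix_cons_iff.1 hsuf with h | h
      · rw [hs] at h
        injection h with h1 _
        rw [h1]
        exact List.mem_cons_self
      · exact List.mem_cons_of_mem _ (ih hs h (by simpa using hlen))

lemma drop_app_eq {α : Type*} (M t : List α) : (M ++ t).drop ((M ++ t).length - t.length) = t := by
  have : (M ++ t).length - t.length = M.length := by simp
  rw [this, List.drop_left]

lemma lift_inv (x : (TK K).World) (p : ℕ → K.World) (hp : IsPath K p)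
    (h0 : p 0 = pw K x.1) (j : ℕ) :
    Valid K (liftL K x p j) ∧ pw K (liftL K x p j) = p j ∧
    ∃ M, liftL K x p j = M ++ x.1 ∧ (∀ e ∈ M, e.2 = 0 ∨ e.2 = x.1.length) ∧
      (M ≠ [] → cdd K (liftL K x p j) = if p (j + 1) = p 0 then x.1.length else 0) := by
  have hn : 1 ≤ x.1.length := by
    cases hx : x.1 with
    | nil => exact absurd hx (x.2.ne_nil K)
    | cons a b => simp
  induction j with
  | zero => exact ⟨x.2, h0.symm, [], by simp [liftL], by simp, by simp [liftL]⟩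
  | succ j ih =>
      obtain ⟨hval, hpw, M, hM, hMc, hMh⟩ := ih
      by_cases hc : p (j + 1) = p 0 ∧ liftL K x p j ≠ x.1
      · refine ⟨?_, ?_, [], ?_, by simp, by simp⟩
        · rw [liftL, if_pos hc]; exact x.2
        · rw [liftL, if_pos hc, ← h0, hc.1]
        · rw [liftL, if_pos hc]; simp
      · have hstep : liftL K x p (j + 1) =
            (p (j + 1), if p (j + 2) = p 0 then x.1.length else 0) :: liftL K x p j := by
          rw [liftL, if_neg hc]
        set c : ℕ := if p (j + 2) = p 0 then x.1.length else 0 with hcdef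
        have hok : Ok K (liftL K x p j) (p (j + 1)) c := by
          by_cases h2 : p (j + 2) = p 0
          · have hcn : c = x.1.length := by rw [hcdef, if_pos h2]
            refine Or.inr ⟨by omega, ?_, ?_, ?_⟩
            · rw [hcn, hM]; simp
            · rw [hcn, hM, drop_app_eq]
              rw [← h0, ← h2]
              exact hp (j + 1)
            · intro s hs hlen hcd
              have hsne : s ≠ [] := by
                intro h; rw [h] at hlen; simp at hlen
              obtain ⟨e, s', hes⟩ : ∃ e s', s = e :: s' := by
                cases s with
                | nil => exact absurd rfl hsne
                | cons a b => exact ⟨a, b, rfl⟩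
              have hmem : e ∈ M := mem_of_suffix_long M hes (hM ▸ hs) (by omega)
              have hce : cdd K s = e.2 := by rw [hes]; rfl
              rcases hMc e hmem with h | h
              · rw [hce, h] at hcd; exact absurd rfl hcd
              · rw [hce, h, hcn]
          · exact Or.inl (by rw [hcdef, if_neg h2])
        refine ⟨?_, ?_, (p (j + 1), c) :: M, ?_, ?_, ?_⟩
        · rw [hstep]; exact Valid.cons hval (hpw ▸ hp j) hok
        · rw [hstep]; rfl
        · rw [hstep, hM]; rfl
        · intro e he
          rcases List.mem_cons.1 he with h | h
          · rw [h]; by_cases h2 : p (j + 2) = p 0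
            · exact Or.inr (by rw [hcdef, if_pos h2])
            · exact Or.inl (by rw [hcdef, if_neg h2])
          · exact hMc e h
        · intro _
          rw [hstep]
          rfl

/-- the lifted path as a function into worlds of `TK K`. -/
noncomputable def liftQ (x : (TK K).World) (p : ℕ → K.World) (hp : IsPath K p)
    (h0 : p 0 = pw K x.1) : ℕ → (TK K).World :=
  fun j => ⟨liftL K x p j, (lift_inv K x p hp h0 j).1⟩

lemma liftQ_zero (x p hp h0) : liftQ K x p hp h0 0 = x := Subtype.ext rfl

lemma liftQ_proj (x p hp h0) : (fun j => pw K ((liftQ K x p hp h0 j)).1) = p :=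
  funext fun j => (lift_inv K x p hp h0 j).2.1

lemma liftQ_path (x p hp h0) : IsPath (TK K) (liftQ K x p hp h0) := by
  intro j
  by_cases hc : p (j + 1) = p 0 ∧ liftL K x p j ≠ x.1
  · right
    obtain ⟨hval, hpw, M, hM, hMc, hMh⟩ := lift_inv K x p hp h0 j
    have hMne : M ≠ [] := by
      rintro rfl; simp at hM; exact hc.2 hM
    have hcd : cdd K (liftL K x p j) = x.1.length := by
      rw [hMh hMne, if_pos hc.1]
    have hn : 1 ≤ x.1.length := by
      cases hx : x.1 with
      | nil => exact absurd hx (x.2.ne_nil K)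
      | cons a b => simp
    have h1 : 1 ≤ cdd K (liftQ K x p hp h0 j).1 := by
      show 1 ≤ cdd K (liftL K x p j); omega
    show bt K (liftQ K x p hp h0 j) = some (liftQ K x p hp h0 (j + 1))
    unfold bt
    rw [dif_pos h1]
    congr 1
    apply Subtype.ext
    show btL K (liftL K x p j) = liftL K x p (j + 1)
    rw [btL, hcd]
    show (liftL K x p j).drop _ = _
    rw [hM, drop_app_eq]
    rw [liftL, if_pos hc]
  · left
    exact ⟨(p (j + 1), if p (j + 2) = p 0 then x.1.length else 0), by
      show liftL K x p (j + 1) = _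
      rw [liftL, if_neg hc]
      rfl⟩

lemma liftQ_cycle (x p hp h0) (hcy : ∀ i, ∃ j, i < j ∧ p j = p 0) :
    IsCycle (TK K) (liftQ K x p hp h0) := by
  refine ⟨liftQ_path K x p hp h0, ?_⟩
  intro i
  obtain ⟨j, hj, hpj⟩ := hcy (i + 1)
  by_cases h : liftL K x p j = x.1
  · exact ⟨j, by omega, Subtype.ext h⟩
  · obtain ⟨j', rfl⟩ : ∃ j', j = j' + 1 := ⟨j - 1, by omega⟩
    refine ⟨j', by omega, Subtype.ext ?_⟩
    show liftL K x p j' = liftL K x p 0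
    by_contra hne
    have : liftL K x p j' ≠ x.1 := hne
    exact h (by rw [liftL, if_pos ⟨hpj, this⟩])

lemma proj_path {q : ℕ → (TK K).World} (h : IsPath (TK K) q) :
    IsPath K (fun j => pw K (q j).1) := fun i => proj_step K (h i)

lemma proj_cycle {q : ℕ → (TK K).World} (h : IsCycle (TK K) q) :
    IsCycle K (fun j => pw K (q j).1) := by
  refine ⟨proj_path K h.1, fun i => ?_⟩
  obtain ⟨j, hj, he⟩ := h.2 i
  exact ⟨j, hj, by show pw K (q j).1 = pw K (q 0).1; rw [he]⟩



end Construction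

mutual
theorem transS (φ : StateForm AP) (K : Kripke.{u} AP) :
    ∀ x : (TK K).World, SatS (TK K) x φ ↔ SatS K (pw K x.1) φ := by
  cases φ with
  | atom a => intro x; simp only [SatS]; exact Iff.rfl
  | not φ => intro x; simp only [SatS]; exact not_congr (transS φ K x)
  | and φ₁ φ₂ => intro x; simp only [SatS]; exact and_congr (transS φ₁ K x) (transS φ₂ K x)
  | or φ₁ φ₂ => intro x; simp only [SatS]; exact or_congr (transS φ₁ K x) (transS φ₂ K x)
  | E ψ =>
      intro x; simp only [SatS]
      constructor
      · rintro ⟨q, hq, h0, hs⟩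
        refine ⟨fun j => pw K (q j).1, proj_path K hq, by show pw K (q 0).1 = _; rw [h0], (transP ψ K q 0).1 hs⟩
      · rintro ⟨p, hp, h0, hs⟩
        exact ⟨liftQ K x p hp h0, liftQ_path K x p hp h0, liftQ_zero K x p hp h0,
          (transP ψ K _ 0).2 (by rw [liftQ_proj K x p hp h0]; exact hs)⟩
  | A ψ =>
      intro x; simp only [SatS]
      constructor
      · intro h p hp h0
        have := h (liftQ K x p hp h0) (liftQ_path K x p hp h0) (liftQ_zero K x p hp h0)
        have := (transP ψ K _ 0).1 this
        rwa [liftQ_proj K x p hp h0] at this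
      · intro h q hq h0
        exact (transP ψ K q 0).2 (h _ (proj_path K hq) (by show pw K (q 0).1 = _; rw [h0]))
  | Ec ψ =>
      intro x; simp only [SatS]
      constructor
      · rintro ⟨q, hq, h0, hs⟩
        refine ⟨fun j => pw K (q j).1, proj_cycle K hq, by show pw K (q 0).1 = _; rw [h0],
          (transP ψ K q 0).1 hs⟩
      · rintro ⟨p, hp, h0, hs⟩
        exact ⟨liftQ K x p hp.1 h0, liftQ_cycle K x p hp.1 h0 hp.2, liftQ_zero K x p hp.1 h0,
          (transP ψ K _ 0).2 (by rw [liftQ_proj K x p hp.1 h0]; exact hs)⟩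
  | Ac ψ =>
      intro x; simp only [SatS]
      constructor
      · intro h p hp h0
        have := h (liftQ K x p hp.1 h0) (liftQ_cycle K x p hp.1 h0 hp.2)
          (liftQ_zero K x p hp.1 h0)
        have := (transP ψ K _ 0).1 this
        rwa [liftQ_proj K x p hp.1 h0] at this
      · intro h q hq h0
        exact (transP ψ K q 0).2 (h _ (proj_cycle K hq) (by show pw K (q 0).1 = _; rw [h0]))

theorem transP (ψ : PathForm AP) (K : Kripke.{u} AP) :
    ∀ (q : ℕ → (TK K).World) (i : ℕ),
      SatP (TK K) q i ψ ↔ SatP K (fun j => pw K (q j).1) i ψ := by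
  cases ψ with
  | state φ => intro q i; simp only [SatP]; exact transS φ K (q i)
  | not ψ => intro q i; simp only [SatP]; exact not_congr (transP ψ K q i)
  | and ψ₁ ψ₂ => intro q i; simp only [SatP]; exact and_congr (transP ψ₁ K q i) (transP ψ₂ K q i)
  | or ψ₁ ψ₂ => intro q i; simp only [SatP]; exact or_congr (transP ψ₁ K q i) (transP ψ₂ K q i)
  | next ψ => intro q i; simp only [SatP]; exact transP ψ K q (i + 1)
  | untl ψ₁ ψ₂ =>
      intro q i; simp only [SatP]
      exact exists_congr fun k => and_congr (transP ψ₂ K q (i + k))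
        (forall_congr' fun j => imp_congr Iff.rfl (transP ψ₁ K q (i + j)))
end



/-- tree-like model property: every satisfiable Cycle-CTL* state formula is
satisfiable in a Kripke structure which is a tree with back edges. -/
theorem stmt11 {AP : Type} (φ : StateForm AP) (K : Kripke.{u} AP) (h : Sat K φ) :
    ∃ K' : Kripke.{u} AP, IsTreeWithBackEdges K' ∧ Sat K' φ :=
  ⟨TK K, ⟨Rt K, bt K, treeDecomp K⟩, (transS φ K (TK K).init).2 h⟩

end CycleCTL
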